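/- Fix β ∈ [1/2, 1). Then for any T ≥ 1 and any N ≥ 1 and any sequence of binary losses l_{t,i} ∈ {0,1}, the cumulative expected loss of the Randomized Weighted-Majority algorithm satisfies 𝓛_T ≤ (log N)/(1 − β) + (2 − β)·𝓛_T^min. -/
import Mathlib


open Finset Real

/-- Weight of expert `i` in the Randomized Weighted-Majority algorithm.
Rounds are indexed starting from `0`, so `rwmWeight β l i t` is the weight
`w_{t+1, i}` of the paper: the initial weight (`t = 0`) is `1`, and the weight is
multiplied by `β` each time the expert incurs a loss of `1`. -/
noncomputable def rwmWeight (β : ℝ) (l : ℕ → ℕ → ℝ) (i : ℕ) : ℕ → ℝ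
  | 0 => 1
  | t + 1 => if l t i = 1 then β * rwmWeight β l i t else rwmWeight β l i t

/-- Total weight `W_{t+1} = ∑_{i=1}^N w_{t+1, i}`. -/
noncomputable def rwmTotalWeight (β : ℝ) (l : ℕ → ℕ → ℝ) (N t : ℕ) : ℝ :=
  ∑ i ∈ Finset.range N, rwmWeight β l i t

/-- Expected loss of the RWM algorithm at round `t`:
`L_t = ∑_{i=1}^N p_{t,i} l_{t,i}` with `p_{t,i} = w_{t,i} / W_t`. -/
noncomputable def rwmRoundLoss (β : ℝ) (l : ℕ → ℕ → ℝ) (N t : ℕ) : ℝ :=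
  ∑ i ∈ Finset.range N, (rwmWeight β l i t / rwmTotalWeight β l N t) * l t i

/-- Cumulative expected loss `𝓛_T = ∑_{t=1}^T L_t` of the RWM algorithm. -/
noncomputable def rwmCumLoss (β : ℝ) (l : ℕ → ℕ → ℝ) (N T : ℕ) : ℝ :=
  ∑ t ∈ Finset.range T, rwmRoundLoss β l N t

/-- Cumulative loss `𝓛_{T,i} = ∑_{t=1}^T l_{t,i}` of expert `i`. -/
noncomputable def rwmExpertLoss (l : ℕ → ℕ → ℝ) (i T : ℕ) : ℝ :=
  ∑ t ∈ Finset.range T, l t i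

lemma rwmWeight_pos {β : ℝ} (hβ : 0 < β) (l : ℕ → ℕ → ℝ) (i t : ℕ) :
    0 < rwmWeight β l i t := by
  induction t with
  | zero => simp [rwmWeight]
  | succ t ih =>
    rw [rwmWeight]
    split
    · exact mul_pos hβ ih
    · exact ih

lemma rwmTotalWeight_pos {β : ℝ} (hβ : 0 < β) (l : ℕ → ℕ → ℝ) {N : ℕ} (hN : 1 ≤ N) (t : ℕ) :
    0 < rwmTotalWeight β l N t :=
  Finset.sum_pos (fun i _ => rwmWeight_pos hβ l i t) (Finset.nonempty_range_iff.mpr (by omega))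

lemma rwmTotalWeight_succ {β : ℝ} (hβ : 0 < β) (l : ℕ → ℕ → ℝ) {N T : ℕ} (hN : 1 ≤ N)
    (hl : ∀ t < T, ∀ i < N, l t i = 0 ∨ l t i = 1) {t : ℕ} (ht : t < T) :
    rwmTotalWeight β l N (t + 1) =
      rwmTotalWeight β l N t * (1 - (1 - β) * rwmRoundLoss β l N t) := by
  have hW := (rwmTotalWeight_pos hβ l hN t).ne'
  have : rwmTotalWeight β l N (t + 1) =
      ∑ i ∈ Finset.range N, (rwmWeight β l i t - (1 - β) * (rwmWeight β l i t * l t i)) := by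
    unfold rwmTotalWeight
    refine Finset.sum_congr rfl fun i hi => ?_
    rcases hl t ht i (Finset.mem_range.mp hi) with h0 | h1
    · rw [rwmWeight]; simp [h0]
    · rw [rwmWeight]; simp [h1]; ring
  have key : rwmTotalWeight β l N t * rwmRoundLoss β l N t =
      ∑ i ∈ Finset.range N, rwmWeight β l i t * l t i := by
    unfold rwmRoundLoss
    rw [Finset.mul_sum]
    refine Finset.sum_congr rfl fun i _ => ?_
    field_simp
  rw [this, Finset.sum_sub_distrib, ← Finset.mul_sum]
  have : (rwmTotalWeight β l N t : ℝ) = ∑ i ∈ Finset.range N, rwmWeight β l i t := rfl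
  nlinarith [key]

lemma neg_log_le_aux (β : ℝ) (hβ₁ : 1 / 2 ≤ β) (hβ₂ : β < 1) :
    -Real.log β ≤ (1 - β) * (2 - β) := by
  set x := 1 - β with hx
  have hx0 : 0 < x := by simp [hx]; linarith
  have hx2 : x ≤ 1 / 2 := by simp [hx]; linarith
  have habs : |x| < 1 := by rw [abs_of_pos hx0]; linarith
  have h := Real.abs_log_sub_add_sum_range_le habs 4
  rw [abs_of_pos hx0] at h
  have hβeq : β = 1 - x := by simp [hx]
  have hsum : (∑ i ∈ range 4, x ^ (i + 1) / (i + 1)) =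
      x + x ^ 2 / 2 + x ^ 3 / 3 + x ^ 4 / 4 := by
    simp [Finset.sum_range_succ]; ring
  rw [hsum] at h
  have h1 : -Real.log (1 - x) ≤ x + x ^ 2 / 2 + x ^ 3 / 3 + x ^ 4 / 4 + x ^ 5 / (1 - x) := by
    have := abs_le.mp h
    linarith [this.2]
  have h2 : x ^ 5 / (1 - x) ≤ 2 * x ^ 5 := by
    rw [div_le_iff₀ (by linarith)]
    nlinarith [pow_pos hx0 5]
  have h3 : x ^ 3 ≤ x ^ 2 / 2 := by nlinarith [sq_nonneg x]
  have h4 : x ^ 4 ≤ x ^ 3 / 2 := by nlinarith [pow_nonneg hx0.le 3]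
  have h5 : x ^ 5 ≤ x ^ 4 / 2 := by nlinarith [pow_nonneg hx0.le 4]
  rw [hβeq]
  nlinarith [h3, h4, h5]

lemma rwmWeight_log {β : ℝ} (hβ : 0 < β) (l : ℕ → ℕ → ℝ) {N T : ℕ}
    (hl : ∀ t < T, ∀ i < N, l t i = 0 ∨ l t i = 1) {i : ℕ} (hi : i < N) :
    ∀ t ≤ T, Real.log (rwmWeight β l i t) = (∑ s ∈ Finset.range t, l s i) * Real.log β := by
  intro t ht
  induction t with
  | zero => simp [rwmWeight]
  | succ t ih =>
    have ht' : t ≤ T := by omega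
    have ihe := ih ht'
    rw [Finset.sum_range_succ]
    rcases hl t (by omega) i hi with h0 | h1
    · rw [rwmWeight]
      simp [h0, ihe]
    · rw [rwmWeight, if_pos h1, Real.log_mul hβ.ne' (rwmWeight_pos hβ l i t).ne', ihe, h1]
      ring

lemma rwmLog_total_le {β : ℝ} (hβ : 0 < β) (l : ℕ → ℕ → ℝ) {N T : ℕ} (hN : 1 ≤ N)
    (hl : ∀ t < T, ∀ i < N, l t i = 0 ∨ l t i = 1) :
    ∀ t ≤ T, Real.log (rwmTotalWeight β l N t) ≤
      Real.log N - (1 - β) * (∑ s ∈ Finset.range t, rwmRoundLoss β l N s) := by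
  intro t ht
  induction t with
  | zero =>
    have : rwmTotalWeight β l N 0 = N := by
      unfold rwmTotalWeight; simp [rwmWeight]
    simp [this]
  | succ t ih =>
    have ht' : t ≤ T := by omega
    have hWt := rwmTotalWeight_pos hβ l hN t
    have hWt1 := rwmTotalWeight_pos hβ l hN (t + 1)
    have hrec := rwmTotalWeight_succ hβ l hN hl (show t < T by omega)
    have hfpos : 0 < 1 - (1 - β) * rwmRoundLoss β l N t := by
      by_contra h
      push_neg at h
      nlinarith [hrec]
    rw [hrec, Real.log_mul hWt.ne' hfpos.ne', Finset.sum_range_succ]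
    have hlog := Real.log_le_sub_one_of_pos hfpos
    have := ih ht'
    linarith


/-- for `β ∈ [1/2, 1)`, `T ≥ 1`, `N ≥ 1` and binary losses,
`𝓛_T ≤ (log N)/(1 − β) + (2 − β)·𝓛_T^min`. -/
theorem rwm_first_loss_bound (β : ℝ) (hβ₁ : 1 / 2 ≤ β) (hβ₂ : β < 1)
    (T N : ℕ) (hT : 1 ≤ T) (hN : 1 ≤ N) (l : ℕ → ℕ → ℝ)
    (hl : ∀ t < T, ∀ i < N, l t i = 0 ∨ l t i = 1) :
    rwmCumLoss β l N T ≤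
      Real.log N / (1 - β) +
        (2 - β) * (Finset.range N).inf'
          (Finset.nonempty_range_iff.mpr (by omega)) (fun i => rwmExpertLoss l i T) := by
  have hβ0 : (0 : ℝ) < β := by linarith
  have h1β : (0 : ℝ) < 1 - β := by linarith
  obtain ⟨i₀, hi₀mem, hi₀eq⟩ := Finset.exists_mem_eq_inf' (Finset.nonempty_range_iff.mpr
    (show N ≠ 0 by omega)) (fun i => rwmExpertLoss l i T)
  have hi₀ : i₀ < N := Finset.mem_range.mp hi₀mem
  set M := rwmExpertLoss l i₀ T with hM
  have hMnn : 0 ≤ M := by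
    refine Finset.sum_nonneg fun t htm => ?_
    rcases hl t (Finset.mem_range.mp htm) i₀ hi₀ with h | h <;> simp [h]
  -- lower bound on log W_T
  have hwle : rwmWeight β l i₀ T ≤ rwmTotalWeight β l N T :=
    Finset.single_le_sum (fun i _ => (rwmWeight_pos hβ0 l i T).le) hi₀mem
  have hloglb : M * Real.log β ≤ Real.log (rwmTotalWeight β l N T) := by
    rw [hM]
    unfold rwmExpertLoss
    rw [← rwmWeight_log hβ0 l hl hi₀ T le_rfl]
    exact Real.log_le_log (rwmWeight_pos hβ0 l i₀ T) hwle
  have hlogub := rwmLog_total_le hβ0 l hN hl T le_rfl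
  have hkey : (1 - β) * rwmCumLoss β l N T ≤ Real.log N - M * Real.log β := by
    unfold rwmCumLoss
    linarith
  have hlogβ := neg_log_le_aux β hβ₁ hβ₂
  have hMlog : -(M * Real.log β) ≤ M * ((1 - β) * (2 - β)) := by
    have := mul_le_mul_of_nonneg_left hlogβ hMnn
    linarith [this]
  have hfin : rwmCumLoss β l N T * (1 - β) ≤ Real.log N + (2 - β) * M * (1 - β) := by
    nlinarith
  rw [hi₀eq]
  have h2 : rwmCumLoss β l N T ≤ (Real.log N + (2 - β) * M * (1 - β)) / (1 - β) :=
    (le_div_iff₀ h1β).mpr hfin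
  have h3 : (Real.log N + (2 - β) * M * (1 - β)) / (1 - β) =
      Real.log N / (1 - β) + (2 - β) * M := by
    field_simp
  simp only [hM] at h2 h3
  linarith
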